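/- If z* minimizes h(z) = √t·‖v(z)‖₂ + z (with v(z)ᵢ = max(0, qᵢ − z)) over z < max_i qᵢ, and v(z*) ≠ 0, then p* = √t · v(z*)/‖v(z*)‖₂ lies in P(t) with p*·p* = t, and p*·q = h(z*) = max{p·q : p ∈ P(t)}. -/

import Mathlib

open Filter

lemma maxSq_hasDerivAt (x : ℝ) :
    HasDerivAt (fun y : ℝ => max 0 y ^ 2) (2 * max 0 x) x := by
  rcases lt_trichotomy x 0 with hx | hx | hx
  · have h0 : (fun y : ℝ => max 0 y ^ 2) =ᶠ[nhds x] fun _ => (0:ℝ) := by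
      filter_upwards [Iio_mem_nhds hx] with y hy
      simp [max_eq_left (le_of_lt (Set.mem_Iio.mp hy))]
    rw [max_eq_left hx.le, mul_zero]
    exact (hasDerivAt_const x (0:ℝ)).congr_of_eventuallyEq h0
  · subst hx
    rw [hasDerivAt_iff_tendsto_slope]
    have hb : ∀ z : ℝ, ‖slope (fun y : ℝ => max 0 y ^ 2) 0 z‖ ≤ |z| := by
      intro z
      rcases le_or_gt z 0 with hz | hz
      · simp [slope_def_field, max_eq_left hz]
      · rw [slope_def_field, max_eq_right hz.le]
        simp only [Real.norm_eq_abs, max_self]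
        have : (z ^ 2 - 0 ^ 2) / (z - 0) = z := by field_simp; ring
        rw [this]
    have habs : Tendsto (fun z : ℝ => |z|) (nhdsWithin (0:ℝ) {(0:ℝ)}ᶜ) (nhds 0) :=
      (continuous_abs.tendsto' 0 0 abs_zero).mono_left nhdsWithin_le_nhds
    simpa using squeeze_zero_norm hb habs
  · have h0 : (fun y : ℝ => max 0 y ^ 2) =ᶠ[nhds x] fun y => y ^ 2 := by
      filter_upwards [Ioi_mem_nhds hx] with y hy
      simp [max_eq_right (le_of_lt (Set.mem_Ioi.mp hy))]
    rw [max_eq_right hx.le]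
    have h2 : HasDerivAt (fun y : ℝ => y ^ 2) (2 * x) x := by
      simpa using hasDerivAt_pow 2 x
    exact h2.congr_of_eventuallyEq h0

theorem stmt_19 {n : ℕ} (hn : 0 < n) (t : ℝ) (ht1 : 1 / (n : ℝ) < t) (ht2 : t < 1)
    (q : Fin n → ℝ) (hq : ∑ i, q i = 1)
    (v : ℝ → Fin n → ℝ) (hv : v = fun z i => max 0 (q i - z))
    (h : ℝ → ℝ)
    (hh : h = fun z => if z < Finset.univ.sup' (Finset.univ_nonempty_iff.mpr
        (Fin.pos_iff_nonempty.mp hn)) q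
      then Real.sqrt t * Real.sqrt (∑ i, v z i ^ 2) + z else z)
    (zstar : ℝ) (hmin : ∀ z : ℝ, h zstar ≤ h z)
    (hvz : v zstar ≠ 0)
    (pstar : Fin n → ℝ)
    (hpstar : pstar = fun i => Real.sqrt t * v zstar i / Real.sqrt (∑ j, v zstar j ^ 2)) :
    ((∀ i, 0 ≤ pstar i) ∧ ∑ i, pstar i = 1 ∧ ∑ i, pstar i * pstar i ≤ t) ∧
      ∑ i, pstar i * pstar i = t ∧
      ∑ i, pstar i * q i = h zstar ∧
      IsGreatest {x : ℝ | ∃ p : Fin n → ℝ,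
          ((∀ i, 0 ≤ p i) ∧ ∑ i, p i = 1 ∧ ∑ i, p i * p i ≤ t) ∧
          x = ∑ i, p i * q i}
        (∑ i, pstar i * q i) := by
  have ht0 : 0 < t := lt_trans (one_div_pos.mpr (Nat.cast_pos.mpr hn)) ht1
  have hV : ∀ z i, v z i = max 0 (q i - z) := fun z i => by rw [hv]
  have hVnn : ∀ i, 0 ≤ v zstar i := fun i => by rw [hV]; exact le_max_left _ _
  obtain ⟨i₀, hi₀⟩ := Function.ne_iff.mp hvz
  have hVi₀ : 0 < v zstar i₀ := lt_of_le_of_ne (hVnn i₀) (Ne.symm hi₀)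
  have hqi₀ : zstar < q i₀ := by
    by_contra hc
    push_neg at hc
    rw [hV, max_eq_left (by linarith)] at hVi₀
    exact lt_irrefl 0 hVi₀
  set M : ℝ := Finset.univ.sup' (Finset.univ_nonempty_iff.mpr
      (Fin.pos_iff_nonempty.mp hn)) q with hM
  have hzM : zstar < M := lt_of_lt_of_le hqi₀ (Finset.le_sup' q (Finset.mem_univ i₀))
  set S : ℝ := ∑ i, v zstar i with hS
  set Nsq : ℝ := ∑ j, v zstar j ^ 2 with hNsq
  have hNsqpos : 0 < Nsq := by
    refine Finset.sum_pos' (fun i _ => sq_nonneg _) ⟨i₀, Finset.mem_univ _, by positivity⟩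
  set N : ℝ := Real.sqrt Nsq with hN
  have hNpos : 0 < N := Real.sqrt_pos.mpr hNsqpos
  have hNN : N * N = Nsq := Real.mul_self_sqrt hNsqpos.le
  -- derivative of h on (-∞, M)
  have hsum : HasDerivAt (fun z : ℝ => ∑ i, max 0 (q i - z) ^ 2)
      (∑ i, 2 * max 0 (q i - zstar) * (-1)) zstar := by
    apply HasDerivAt.fun_sum
    intro i _
    have hinner : HasDerivAt (fun z : ℝ => q i - z) (-1) zstar := by
      simpa using (hasDerivAt_id zstar).const_sub (q i)
    exact (maxSq_hasDerivAt (q i - zstar)).comp zstar hinner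
  have hsumval : (∑ i, max 0 (q i - zstar) ^ 2) = Nsq := by
    rw [hNsq]; exact Finset.sum_congr rfl (fun i _ => by rw [hV])
  have hsqrt : HasDerivAt (fun z : ℝ => Real.sqrt (∑ i, max 0 (q i - z) ^ 2))
      ((∑ i, 2 * max 0 (q i - zstar) * (-1)) / (2 * N)) zstar := by
    have := hsum.sqrt (by rw [hsumval]; exact hNsqpos.ne')
    rwa [hsumval] at this
  have hfder : HasDerivAt (fun z : ℝ => Real.sqrt t * Real.sqrt (∑ i, v z i ^ 2) + z)
      (Real.sqrt t * ((∑ i, 2 * max 0 (q i - zstar) * (-1)) / (2 * N)) + 1) zstar := by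
    have heq : (fun z : ℝ => Real.sqrt t * Real.sqrt (∑ i, v z i ^ 2) + z)
        = (fun z : ℝ => Real.sqrt t * Real.sqrt (∑ i, max 0 (q i - z) ^ 2) + z) := by
      funext z; simp only [hV]
    rw [heq]
    exact (hsqrt.const_mul (Real.sqrt t)).add (hasDerivAt_id zstar)
  have hloc : IsLocalMin (fun z : ℝ => Real.sqrt t * Real.sqrt (∑ i, v z i ^ 2) + z) zstar := by
    have hhz : h zstar = Real.sqrt t * Real.sqrt (∑ i, v zstar i ^ 2) + zstar := by
      rw [hh]; simp only [if_pos hzM]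
    filter_upwards [Iio_mem_nhds hzM] with z hz
    have h1 := hmin z
    rw [hh] at h1
    simp only [if_pos hzM, if_pos (Set.mem_Iio.mp hz)] at h1
    exact h1
  have hder0 := hloc.hasDerivAt_eq_zero hfder
  have hsum2S : (∑ i, 2 * max 0 (q i - zstar) * (-1)) = -(2 * S) := by
    rw [hS, Finset.mul_sum]
    rw [← Finset.sum_neg_distrib]
    exact Finset.sum_congr rfl (fun i _ => by rw [hV]; ring)
  rw [hsum2S] at hder0
  have hkey : Real.sqrt t * S = N := by
    have hN' : N ≠ 0 := hNpos.ne'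
    field_simp at hder0
    linarith
  have hSpos : 0 < S := by
    have hst : 0 < Real.sqrt t := Real.sqrt_pos.mpr ht0
    nlinarith
  -- basic facts about pstar
  have hp0 : ∀ i, 0 ≤ pstar i := by
    intro i
    rw [hpstar]
    exact div_nonneg (mul_nonneg (Real.sqrt_nonneg t) (hVnn i)) (Real.sqrt_nonneg _)
  have hp1 : ∑ i, pstar i = 1 := by
    rw [hpstar]
    rw [← Finset.sum_div, ← Finset.mul_sum, ← hS, hkey, div_self hNpos.ne']
  have hp2 : ∑ i, pstar i * pstar i = t := by
    rw [hpstar]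
    simp only
    have e : ∀ i : Fin n, Real.sqrt t * v zstar i / N * (Real.sqrt t * v zstar i / N)
        = t * (v zstar i ^ 2) / Nsq := by
      intro i
      rw [div_mul_div_comm, hNN]
      congr 1
      rw [mul_mul_mul_comm, Real.mul_self_sqrt ht0.le, sq]
    rw [Finset.sum_congr rfl (fun i _ => e i), ← Finset.sum_div, ← Finset.mul_sum, ← hNsq,
      mul_div_assoc, div_self hNsqpos.ne', mul_one]
  have hvq : ∀ i, v zstar i * q i = v zstar i ^ 2 + zstar * v zstar i := by
    intro i
    rw [hV]
    rcases le_or_gt (q i - zstar) 0 with hc | hc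
    · rw [max_eq_left hc]; ring
    · rw [max_eq_right hc.le]; ring
  have hpq : ∑ i, pstar i * q i = Real.sqrt t * N + zstar := by
    rw [hpstar]
    simp only
    have e : ∀ i : Fin n, Real.sqrt t * v zstar i / N * q i
        = Real.sqrt t * (v zstar i * q i) / N := by
      intro i; ring
    rw [Finset.sum_congr rfl (fun i _ => e i), ← Finset.sum_div, ← Finset.mul_sum,
      Finset.sum_congr rfl (fun i _ => hvq i), Finset.sum_add_distrib, ← Finset.mul_sum,
      ← hNsq, ← hS, mul_add, add_div]
    have e1 : Real.sqrt t * Nsq / N = Real.sqrt t * N := by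
      rw [← hNN, ← mul_assoc, mul_div_assoc, div_self hNpos.ne', mul_one]
    have e2 : Real.sqrt t * (zstar * S) / N = zstar := by
      rw [mul_comm zstar S, ← mul_assoc, hkey, mul_comm, mul_div_assoc, div_self hNpos.ne',
        mul_one]
    rw [e1, e2]
  have hhzstar : h zstar = Real.sqrt t * N + zstar := by
    simp only [hh, if_pos hzM, ← hNsq, ← hN]
  -- upper bound
  have hub : ∀ p : Fin n → ℝ, (∀ i, 0 ≤ p i) → ∑ i, p i = 1 → ∑ i, p i * p i ≤ t →
      ∑ i, p i * q i ≤ Real.sqrt t * N + zstar := by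
    intro p hp0' hp1' hp2'
    have step1 : ∑ i, p i * q i = (∑ i, p i * (q i - zstar)) + zstar := by
      have : ∑ i, p i * (q i - zstar) = (∑ i, p i * q i) - zstar := by
        simp only [mul_sub]
        rw [Finset.sum_sub_distrib, ← Finset.sum_mul, hp1', one_mul]
      rw [this]; ring
    have step2 : ∑ i, p i * (q i - zstar) ≤ ∑ i, p i * v zstar i := by
      apply Finset.sum_le_sum
      intro i _
      exact mul_le_mul_of_nonneg_left (by rw [hV]; exact le_max_right _ _) (hp0' i)
    have hA : 0 ≤ ∑ i, p i * v zstar i :=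
      Finset.sum_nonneg fun i _ => mul_nonneg (hp0' i) (hVnn i)
    have step3 : (∑ i, p i * v zstar i) ^ 2 ≤ t * Nsq := by
      calc (∑ i, p i * v zstar i) ^ 2 ≤ (∑ i, p i ^ 2) * ∑ i, v zstar i ^ 2 :=
            Finset.sum_mul_sq_le_sq_mul_sq _ _ _
        _ ≤ t * Nsq := by
            rw [← hNsq]
            apply mul_le_mul_of_nonneg_right _ hNsqpos.le
            calc ∑ i, p i ^ 2 = ∑ i, p i * p i := by
                  exact Finset.sum_congr rfl fun i _ => pow_two (p i)
              _ ≤ t := hp2'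
    have step4 : ∑ i, p i * v zstar i ≤ Real.sqrt t * N := by
      have h5 : Real.sqrt ((∑ i, p i * v zstar i) ^ 2) ≤ Real.sqrt (t * Nsq) :=
        Real.sqrt_le_sqrt step3
      rw [Real.sqrt_sq hA, Real.sqrt_mul ht0.le, ← hN] at h5
      exact h5
    linarith [step1, step2, step4]
  refine ⟨⟨hp0, hp1, hp2.le⟩, hp2, hpq.trans hhzstar.symm, ⟨⟨pstar, ⟨hp0, hp1, hp2.le⟩, rfl⟩, ?_⟩⟩
  rintro x ⟨p, ⟨hp0', hp1', hp2'⟩, rfl⟩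
  rw [hpq]
  exact hub p hp0' hp1' hp2'
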